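/- Let G be an edge-coloured multigraph with n colours such that for each colour, the edges of that colour form a disjoint union of non-trivial cliques spanning at least 3n vertices in total. Then G contains a rainbow matching of size at least n - \sqrt{n}. -/

import Mathlib

open Finset
open scoped Classical

section Defs

variable {V C E : Type*}

/-- The two endpoints of an edge of a multigraph given by endpoint functions `e₁ e₂`. -/
def edgeEnds [DecidableEq V] (e₁ e₂ : E → V) (e : E) : Finset V := {e₁ e, e₂ e}

/-- A finite set of edges is a matching: all edges are non-loops and pairwise vertex-disjoint. -/
def IsMatchingE [DecidableEq V] (e₁ e₂ : E → V) (M : Finset E) : Prop :=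
  (∀ e ∈ M, e₁ e ≠ e₂ e) ∧
  ∀ a ∈ M, ∀ b ∈ M, a ≠ b → Disjoint (edgeEnds e₁ e₂ a) (edgeEnds e₁ e₂ b)

/-- A set of edges is rainbow: all its edges have pairwise distinct colours. -/
def IsRainbow (col : E → C) (M : Finset E) : Prop := Set.InjOn col ↑M

/-- The colour class of colour `c`: the set of all edges of colour `c`. -/
noncomputable def colourClass [Fintype E] (col : E → C) (c : C) : Finset E :=
  Finset.univ.filter fun e => col e = c

/-- The set of vertices covered by a set of edges `M`. -/
def matchedVerts [DecidableEq V] (e₁ e₂ : E → V) (M : Finset E) : Finset V :=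
  M.biUnion (edgeEnds e₁ e₂)

/-- The set of vertices spanned by the colour class of `c`
(i.e. incident to at least one edge of colour `c`). -/
noncomputable def spannedVerts [Fintype V] [DecidableEq V] [Fintype E]
    (e₁ e₂ : E → V) (col : E → C) (c : C) : Finset V :=
  Finset.univ.filter fun v => ∃ e, col e = c ∧ (e₁ e = v ∨ e₂ e = v)

/-- `u` and `v` are distinct vertices joined by an edge of colour `c`. -/
def adjOfColour (e₁ e₂ : E → V) (col : E → C) (c : C) (u v : V) : Prop :=
  u ≠ v ∧ ∃ e, col e = c ∧ ((e₁ e = u ∧ e₂ e = v) ∨ (e₁ e = v ∧ e₂ e = u))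

/-- The colour class of `c` is a vertex-disjoint union of (non-trivial) cliques:
whenever `uv` and `vw` are edges of colour `c` with `u ≠ w`, also `uw` is an
edge of colour `c`. -/
def IsCliqueUnion (e₁ e₂ : E → V) (col : E → C) (c : C) : Prop :=
  ∀ u v w, adjOfColour e₁ e₂ col c u v → adjOfColour e₁ e₂ col c v w → u ≠ w →
    adjOfColour e₁ e₂ col c u w

end Defs

section Aux

variable {V E : Type*} [Fintype V] [DecidableEq V] [Fintype E] {n : ℕ}

/-- Auxiliary: the edge `f` is "split" by colour `c` (w.r.t. matching `M`): there are two
distinct unmatched vertices adjacent in colour `c` to the two endpoints of `f`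
respectively. -/
def SplitAt (e₁ e₂ : E → V) (col : E → Fin n) (M : Finset E) (c : Fin n) (f : E) : Prop :=
  ∃ w w', w ∉ matchedVerts e₁ e₂ M ∧ w' ∉ matchedVerts e₁ e₂ M ∧ w ≠ w' ∧
    adjOfColour e₁ e₂ col c (e₁ f) w ∧ adjOfColour e₁ e₂ col c (e₂ f) w'

variable {e₁ e₂ : E → V} {col : E → Fin n}

lemma mem_matchedVerts' {M : Finset E} {x : V} :
    x ∈ matchedVerts e₁ e₂ M ↔ ∃ f ∈ M, x = e₁ f ∨ x = e₂ f := by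
  simp [matchedVerts, edgeEnds]

lemma adjOfColour_symm' {c : Fin n} {u v : V} (h : adjOfColour e₁ e₂ col c u v) :
    adjOfColour e₁ e₂ col c v u := by
  obtain ⟨hne, e, hce, he⟩ := h
  exact ⟨hne.symm, e, hce, he.symm⟩

lemma matched_left {M : Finset E} {f : E} (hf : f ∈ M) : e₁ f ∈ matchedVerts e₁ e₂ M :=
  mem_matchedVerts'.mpr ⟨f, hf, Or.inl rfl⟩

lemma matched_right {M : Finset E} {f : E} (hf : f ∈ M) : e₂ f ∈ matchedVerts e₁ e₂ M :=
  mem_matchedVerts'.mpr ⟨f, hf, Or.inr rfl⟩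

lemma edgeEnds_eq {g : E} {u v : V}
    (h : (e₁ g = u ∧ e₂ g = v) ∨ (e₁ g = v ∧ e₂ g = u)) :
    edgeEnds e₁ e₂ g = {u, v} := by
  rcases h with ⟨h1, h2⟩ | ⟨h1, h2⟩
  · rw [edgeEnds, h1, h2]
  · rw [edgeEnds, h1, h2, Finset.pair_comm]

/-- If a colour is free and two unmatched vertices are adjacent in this colour,
the matching was not maximum. -/
lemma no_free_edge_unmatched
    {M : Finset E} (hM : IsMatchingE e₁ e₂ M) (hR : IsRainbow col M)
    (hmax : ∀ M' : Finset E, IsMatchingE e₁ e₂ M' → IsRainbow col M' → M'.card ≤ M.card)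
    {c : Fin n} (hfree : ∀ e ∈ M, col e ≠ c) {u v : V}
    (huv : adjOfColour e₁ e₂ col c u v)
    (hu : u ∉ matchedVerts e₁ e₂ M) (hv : v ∉ matchedVerts e₁ e₂ M) : False := by
  obtain ⟨hne, g, hgc, hg⟩ := huv
  have hgM : g ∉ M := fun h => hfree g h hgc
  have hends : edgeEnds e₁ e₂ g = {u, v} := edgeEnds_eq hg
  have hnl : e₁ g ≠ e₂ g := by
    rcases hg with ⟨h1, h2⟩ | ⟨h1, h2⟩ <;> rw [h1, h2]
    · exact hne
    · exact hne.symm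
  have hdisj : ∀ b ∈ M, Disjoint (edgeEnds e₁ e₂ g) (edgeEnds e₁ e₂ b) := by
    intro b hb
    rw [hends, Finset.disjoint_left]
    intro x hx hxb
    have hxm : x ∈ matchedVerts e₁ e₂ M := mem_biUnion.mpr ⟨b, hb, hxb⟩
    rcases mem_insert.mp hx with rfl | hx
    · exact hu hxm
    · rw [mem_singleton] at hx; subst hx; exact hv hxm
  have hM' : IsMatchingE e₁ e₂ (insert g M) := by
    constructor
    · intro e he
      rcases mem_insert.mp he with rfl | he
      · exact hnl
      · exact hM.1 e he
    · intro a ha b hb hab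
      rcases mem_insert.mp ha with ha1 | ha1
      · rcases mem_insert.mp hb with hb1 | hb1
        · exact absurd (ha1.trans hb1.symm) hab
        · rw [ha1]; exact hdisj b hb1
      · rcases mem_insert.mp hb with hb1 | hb1
        · rw [hb1]; exact (hdisj a ha1).symm
        · exact hM.2 a ha1 b hb1 hab
  have hR' : IsRainbow col (insert g M) := by
    intro a ha b hb hab
    rw [coe_insert, Set.mem_insert_iff] at ha hb
    rcases ha with rfl | ha
    · rcases hb with rfl | hb
      · rfl
      · exact absurd (hab.symm.trans hgc) (hfree b hb)
    · rcases hb with rfl | hb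
      · exact absurd (hab.trans hgc) (hfree a ha)
      · exact hR ha hb hab
  have hle := hmax _ hM' hR'
  rw [card_insert_of_notMem hgM] at hle
  omega

/-- The key augmenting move: if an edge `f` of a maximum rainbow matching has its two
endpoints joined (in two distinct free colours) to two distinct unmatched vertices,
we could enlarge the matching: contradiction. -/
lemma no_augmenting_pair
    {M : Finset E} (hloop : ∀ e : E, e₁ e ≠ e₂ e)
    (hM : IsMatchingE e₁ e₂ M) (hR : IsRainbow col M)
    (hmax : ∀ M' : Finset E, IsMatchingE e₁ e₂ M' → IsRainbow col M' → M'.card ≤ M.card)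
    {c c' : Fin n} (hfc : ∀ e ∈ M, col e ≠ c) (hfc' : ∀ e ∈ M, col e ≠ c') (hcc : c ≠ c')
    {f : E} (hf : f ∈ M) {w w' : V}
    (hw : w ∉ matchedVerts e₁ e₂ M) (hw' : w' ∉ matchedVerts e₁ e₂ M) (hww : w ≠ w')
    (h1 : adjOfColour e₁ e₂ col c (e₁ f) w)
    (h2 : adjOfColour e₁ e₂ col c' (e₂ f) w') : False := by
  obtain ⟨hne1, g, hgc, hg⟩ := h1
  obtain ⟨hne2, g', hgc', hg'⟩ := h2
  have hEg : edgeEnds e₁ e₂ g = {e₁ f, w} := edgeEnds_eq hg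
  have hEg' : edgeEnds e₁ e₂ g' = {e₂ f, w'} := edgeEnds_eq hg'
  have hgg' : g ≠ g' := fun h => hcc (by rw [← hgc, h, hgc'])
  have hgM : ∀ e ∈ M, g ≠ e := fun e he h => hfc e he (by rw [← h, hgc])
  have hg'M : ∀ e ∈ M, g' ≠ e := fun e he h => hfc' e he (by rw [← h, hgc'])
  have hx1 : e₁ f ∈ matchedVerts e₁ e₂ M := matched_left hf
  have hx2 : e₂ f ∈ matchedVerts e₁ e₂ M := matched_right hf
  -- disjointness of the new edges from the old (f removed) ones
  have hdg : ∀ b ∈ M.erase f, Disjoint (edgeEnds e₁ e₂ g) (edgeEnds e₁ e₂ b) := by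
    intro b hb
    have hbf : b ≠ f := ne_of_mem_erase hb
    have hbM : b ∈ M := mem_of_mem_erase hb
    have hdfb : Disjoint (edgeEnds e₁ e₂ f) (edgeEnds e₁ e₂ b) :=
      hM.2 f hf b hbM (Ne.symm hbf)
    rw [hEg, Finset.disjoint_left]
    intro x hx hxb
    rcases mem_insert.mp hx with rfl | hx
    · exact (Finset.disjoint_left.mp hdfb (by rw [edgeEnds]; exact mem_insert_self _ _)) hxb
    · rw [mem_singleton] at hx; subst hx
      exact hw (mem_biUnion.mpr ⟨b, hbM, hxb⟩)
  have hdg' : ∀ b ∈ M.erase f, Disjoint (edgeEnds e₁ e₂ g') (edgeEnds e₁ e₂ b) := by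
    intro b hb
    have hbf : b ≠ f := ne_of_mem_erase hb
    have hbM : b ∈ M := mem_of_mem_erase hb
    have hdfb : Disjoint (edgeEnds e₁ e₂ f) (edgeEnds e₁ e₂ b) :=
      hM.2 f hf b hbM (Ne.symm hbf)
    rw [hEg', Finset.disjoint_left]
    intro x hx hxb
    rcases mem_insert.mp hx with rfl | hx
    · refine (Finset.disjoint_left.mp hdfb ?_) hxb
      rw [edgeEnds]; exact mem_insert_of_mem (mem_singleton_self _)
    · rw [mem_singleton] at hx; subst hx
      exact hw' (mem_biUnion.mpr ⟨b, hbM, hxb⟩)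
  have hdgg' : Disjoint (edgeEnds e₁ e₂ g) (edgeEnds e₁ e₂ g') := by
    rw [hEg, hEg', Finset.disjoint_left]
    intro x hx hx'
    rcases mem_insert.mp hx with h0 | h0
    · rcases mem_insert.mp hx' with h | h
      · exact hloop f (h0.symm.trans h)
      · rw [mem_singleton] at h
        exact hw' (by rw [← h, h0]; exact hx1)
    · rw [mem_singleton] at h0
      rcases mem_insert.mp hx' with h | h
      · exact hw (by rw [← h0, h]; exact hx2)
      · rw [mem_singleton] at h
        exact hww (h0.symm.trans h)
  -- set up the new matching
  have hgnot : g ∉ insert g' (M.erase f) := by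
    intro h
    rcases mem_insert.mp h with h | h
    · exact hgg' h
    · exact hgM _ (mem_of_mem_erase h) rfl
  have hg'not : g' ∉ M.erase f := fun h => hg'M _ (mem_of_mem_erase h) rfl
  have hnlg : e₁ g ≠ e₂ g := by
    rcases hg with ⟨ha, hb⟩ | ⟨ha, hb⟩ <;> rw [ha, hb]
    · exact hne1
    · exact hne1.symm
  have hnlg' : e₁ g' ≠ e₂ g' := by
    rcases hg' with ⟨ha, hb⟩ | ⟨ha, hb⟩ <;> rw [ha, hb]
    · exact hne2
    · exact hne2.symm
  have hM' : IsMatchingE e₁ e₂ (insert g (insert g' (M.erase f))) := by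
    constructor
    · intro e he
      rcases mem_insert.mp he with rfl | he
      · exact hnlg
      · rcases mem_insert.mp he with rfl | he
        · exact hnlg'
        · exact hM.1 e (mem_of_mem_erase he)
    · intro a ha b hb hab
      rcases mem_insert.mp ha with ha1 | ha1
      · rcases mem_insert.mp hb with hb1 | hb1
        · exact absurd (ha1.trans hb1.symm) hab
        · rcases mem_insert.mp hb1 with hb2 | hb2
          · rw [ha1, hb2]; exact hdgg'
          · rw [ha1]; exact hdg b hb2
      · rcases mem_insert.mp ha1 with ha2 | ha2
        · rcases mem_insert.mp hb with hb1 | hb1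
          · rw [ha2, hb1]; exact hdgg'.symm
          · rcases mem_insert.mp hb1 with hb2 | hb2
            · exact absurd (ha2.trans hb2.symm) hab
            · rw [ha2]; exact hdg' b hb2
        · rcases mem_insert.mp hb with hb1 | hb1
          · rw [hb1]; exact (hdg a ha2).symm
          · rcases mem_insert.mp hb1 with hb2 | hb2
            · rw [hb2]; exact (hdg' a ha2).symm
            · exact hM.2 a (mem_of_mem_erase ha2) b (mem_of_mem_erase hb2) hab
  have hR' : IsRainbow col (insert g (insert g' (M.erase f))) := by
    intro a ha b hb hab
    simp only [coe_insert, Set.mem_insert_iff, mem_coe] at ha hb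
    have hximp : ∀ x ∈ M.erase f, x ∈ M := fun x hx => mem_of_mem_erase hx
    rcases ha with rfl | rfl | ha <;> rcases hb with rfl | rfl | hb
    · rfl
    · exact (hcc (by rw [← hgc, ← hgc']; exact hab)).elim
    · exact ((hfc b (hximp b hb)) (by rw [← hab, hgc])).elim
    · exact (hcc (by rw [← hgc, ← hgc']; exact hab.symm)).elim
    · rfl
    · exact ((hfc' b (hximp b hb)) (by rw [← hab, hgc'])).elim
    · exact ((hfc a (hximp a ha)) (hab.trans hgc)).elim
    · exact ((hfc' a (hximp a ha)) (hab.trans hgc')).elim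
    · exact hR (mem_coe.mpr (hximp a ha)) (mem_coe.mpr (hximp b hb)) hab
  have hle := hmax _ hM' hR'
  have hc1 : (insert g (insert g' (M.erase f))).card = (M.erase f).card + 2 := by
    rw [card_insert_of_notMem hgnot, card_insert_of_notMem hg'not]
  have hc2 : (M.erase f).card = M.card - 1 := card_erase_of_mem hf
  have hc3 : 1 ≤ M.card := card_pos.mpr ⟨f, hf⟩
  omega

/-- For a free colour `c`, many edges of the maximum matching are `c`-split. -/
lemma splits_lower
    {M : Finset E} (hloop : ∀ e : E, e₁ e ≠ e₂ e)
    (hM : IsMatchingE e₁ e₂ M) (hR : IsRainbow col M)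
    (hmax : ∀ M' : Finset E, IsMatchingE e₁ e₂ M' → IsRainbow col M' → M'.card ≤ M.card)
    {c : Fin n} (hclq : IsCliqueUnion e₁ e₂ col c)
    (hsp : 3 * n ≤ (spannedVerts e₁ e₂ col c).card)
    (hfree : ∀ e ∈ M, col e ≠ c) :
    3 * n ≤ 3 * M.card + (M.filter (SplitAt e₁ e₂ col M c)).card := by
  classical
  -- uniqueness of unmatched neighbours
  have uniq : ∀ x w w', w ∉ matchedVerts e₁ e₂ M → w' ∉ matchedVerts e₁ e₂ M →
      adjOfColour e₁ e₂ col c x w → adjOfColour e₁ e₂ col c x w' → w = w' := by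
    intro x w w' hw hw' h h'
    by_contra hne
    exact no_free_edge_unmatched hM hR hmax hfree
      (hclq w x w' (adjOfColour_symm' h) h' hne) hw hw'
  set W := (spannedVerts e₁ e₂ col c).filter
      (fun v => v ∉ matchedVerts e₁ e₂ M) with hWdef
  -- span bounded by matched vertices plus W
  have hspan_le : (spannedVerts e₁ e₂ col c).card ≤ 2 * M.card + W.card := by
    have hmvcard : (matchedVerts e₁ e₂ M).card ≤ 2 * M.card := by
      calc (matchedVerts e₁ e₂ M).card ≤ ∑ f ∈ M, (edgeEnds e₁ e₂ f).card :=
            card_biUnion_le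
        _ ≤ ∑ _f ∈ M, 2 := by
            refine sum_le_sum (fun f _ => ?_)
            rw [edgeEnds]
            exact (card_insert_le _ _).trans (by simp)
        _ = 2 * M.card := by rw [sum_const, smul_eq_mul, mul_comm]
    have h1 : ((spannedVerts e₁ e₂ col c).filter
        (fun v => v ∈ matchedVerts e₁ e₂ M)).card ≤ 2 * M.card := by
      refine le_trans (card_le_card ?_) hmvcard
      intro x hx
      exact (mem_filter.mp hx).2
    calc (spannedVerts e₁ e₂ col c).card
        = ((spannedVerts e₁ e₂ col c).filter (fun v => v ∈ matchedVerts e₁ e₂ M) ∪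
           (spannedVerts e₁ e₂ col c).filter (fun v => v ∉ matchedVerts e₁ e₂ M)).card := by
          rw [filter_union_filter_not_eq]
      _ ≤ ((spannedVerts e₁ e₂ col c).filter (fun v => v ∈ matchedVerts e₁ e₂ M)).card +
          W.card := card_union_le _ _
      _ ≤ 2 * M.card + W.card := by omega
  -- each element of W is adjacent to an endpoint of an edge of M
  set A : E → Finset V := fun f => W.filter
      (fun w => adjOfColour e₁ e₂ col c (e₁ f) w ∨ adjOfColour e₁ e₂ col c (e₂ f) w)
    with hAdef
  have hWsub : W ⊆ M.biUnion A := by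
    intro w hwW
    have hwunm : w ∉ matchedVerts e₁ e₂ M := (mem_filter.mp hwW).2
    have hwsp : w ∈ spannedVerts e₁ e₂ col c := (mem_filter.mp hwW).1
    have hwsp' : ∃ e, col e = c ∧ (e₁ e = w ∨ e₂ e = w) := by
      simpa [spannedVerts] using hwsp
    obtain ⟨e, hec, he⟩ := hwsp'
    obtain ⟨x, hadj⟩ : ∃ x, adjOfColour e₁ e₂ col c x w := by
      rcases he with h | h
      · refine ⟨e₂ e, ?_, e, hec, Or.inr ⟨h, rfl⟩⟩
        intro hxw
        exact hloop e (by rw [h, ← hxw])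
      · refine ⟨e₁ e, ?_, e, hec, Or.inl ⟨rfl, h⟩⟩
        intro hxw
        exact hloop e (by rw [hxw, h])
    have hxm : x ∈ matchedVerts e₁ e₂ M := by
      by_contra hxm
      exact no_free_edge_unmatched hM hR hmax hfree hadj hxm hwunm
    obtain ⟨f, hfM, hxf⟩ := mem_matchedVerts'.mp hxm
    refine mem_biUnion.mpr ⟨f, hfM, mem_filter.mpr ⟨hwW, ?_⟩⟩
    rcases hxf with h | h
    · exact Or.inl (h ▸ hadj)
    · exact Or.inr (h ▸ hadj)
  have hunmA : ∀ f, ∀ w ∈ A f, w ∉ matchedVerts e₁ e₂ M := by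
    intro f w hw
    exact (mem_filter.mp (mem_filter.mp hw).1).2
  have hApair : ∀ f, ∀ w ∈ A f, ∀ w' ∈ A f, w ≠ w' →
      (adjOfColour e₁ e₂ col c (e₁ f) w ∧ adjOfColour e₁ e₂ col c (e₂ f) w') ∨
      (adjOfColour e₁ e₂ col c (e₁ f) w' ∧ adjOfColour e₁ e₂ col c (e₂ f) w) := by
    intro f w hw w' hw' hne
    have h1 := (mem_filter.mp hw).2
    have h2 := (mem_filter.mp hw').2
    have hwu := hunmA f w hw
    have hwu' := hunmA f w' hw'
    rcases h1 with h1 | h1 <;> rcases h2 with h2 | h2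
    · exact absurd (uniq _ _ _ hwu hwu' h1 h2) hne
    · exact Or.inl ⟨h1, h2⟩
    · exact Or.inr ⟨h2, h1⟩
    · exact absurd (uniq _ _ _ hwu hwu' h1 h2) hne
  have hAcard : ∀ f ∈ M, (A f).card ≤ 1 + (if SplitAt e₁ e₂ col M c f then 1 else 0) := by
    intro f hfM
    by_cases hs : SplitAt e₁ e₂ col M c f
    · simp only [hs, if_true]
      by_contra hlt
      push_neg at hlt
      have h3card : 2 < (A f).card := by omega
      obtain ⟨a, ha, b, hb, c0, hc0, hab, hac, hbc⟩ := two_lt_card.mp h3card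
      have hc0adj := (mem_filter.mp hc0).2
      rcases hApair f a ha b hb hab with ⟨haa, hbb⟩ | ⟨hbb, haa⟩
      · rcases hc0adj with h | h
        · exact hac (uniq _ _ _ (hunmA f a ha) (hunmA f c0 hc0) haa h)
        · exact hbc (uniq _ _ _ (hunmA f b hb) (hunmA f c0 hc0) hbb h)
      · rcases hc0adj with h | h
        · exact hbc (uniq _ _ _ (hunmA f b hb) (hunmA f c0 hc0) hbb h)
        · exact hac (uniq _ _ _ (hunmA f a ha) (hunmA f c0 hc0) haa h)
    · simp only [hs, if_false]
      by_contra hlt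
      push_neg at hlt
      have h2card : 1 < (A f).card := by omega
      obtain ⟨a, ha, b, hb, hab⟩ := one_lt_card.mp h2card
      rcases hApair f a ha b hb hab with ⟨h1, h2⟩ | ⟨h1, h2⟩
      · exact hs ⟨a, b, hunmA f a ha, hunmA f b hb, hab, h1, h2⟩
      · exact hs ⟨b, a, hunmA f b hb, hunmA f a ha, hab.symm, h1, h2⟩
  have hWcard : W.card ≤ M.card + (M.filter (SplitAt e₁ e₂ col M c)).card := by
    calc W.card ≤ (M.biUnion A).card := card_le_card hWsub
      _ ≤ ∑ f ∈ M, (A f).card := card_biUnion_le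
      _ ≤ ∑ f ∈ M, (1 + if SplitAt e₁ e₂ col M c f then 1 else 0) := sum_le_sum hAcard
      _ = M.card + (M.filter (SplitAt e₁ e₂ col M c)).card := by
          rw [sum_add_distrib, sum_const, smul_eq_mul, mul_one, ← card_filter]
  omega

/-- Each edge is split by at most two free colours. -/
lemma splits_upper
    {M : Finset E} (hloop : ∀ e : E, e₁ e ≠ e₂ e)
    (hM : IsMatchingE e₁ e₂ M) (hR : IsRainbow col M)
    (hmax : ∀ M' : Finset E, IsMatchingE e₁ e₂ M' → IsRainbow col M' → M'.card ≤ M.card)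
    {f : E} (hf : f ∈ M) :
    (((univ : Finset (Fin n)).filter (fun c => ∀ e ∈ M, col e ≠ c)).filter
      (fun c => SplitAt e₁ e₂ col M c f)).card ≤ 2 := by
  by_contra hlt
  push_neg at hlt
  have h3card : 2 < (((univ : Finset (Fin n)).filter (fun c => ∀ e ∈ M, col e ≠ c)).filter
      (fun c => SplitAt e₁ e₂ col M c f)).card := by omega
  obtain ⟨c1, hc1, c2, hc2, c3, hc3, h12, h13, h23⟩ := two_lt_card.mp h3card
  have free1 : ∀ e ∈ M, col e ≠ c1 := (mem_filter.mp (mem_filter.mp hc1).1).2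
  have free2 : ∀ e ∈ M, col e ≠ c2 := (mem_filter.mp (mem_filter.mp hc2).1).2
  have free3 : ∀ e ∈ M, col e ≠ c3 := (mem_filter.mp (mem_filter.mp hc3).1).2
  obtain ⟨w1, w1', hw1, hw1', hne1, ha1, hb1⟩ := (mem_filter.mp hc1).2
  obtain ⟨w2, w2', hw2, hw2', hne2, ha2, hb2⟩ := (mem_filter.mp hc2).2
  obtain ⟨w3, w3', hw3, hw3', hne3, ha3, hb3⟩ := (mem_filter.mp hc3).2
  have cross : ∀ {ci cj : Fin n} {wi wj' : V}, (∀ e ∈ M, col e ≠ ci) →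
      (∀ e ∈ M, col e ≠ cj) → ci ≠ cj →
      wi ∉ matchedVerts e₁ e₂ M → wj' ∉ matchedVerts e₁ e₂ M →
      adjOfColour e₁ e₂ col ci (e₁ f) wi → adjOfColour e₁ e₂ col cj (e₂ f) wj' →
      wi = wj' := by
    intro ci cj wi wj' hfi hfj hij hwi hwj hai haj
    by_contra hne
    exact no_augmenting_pair hloop hM hR hmax hfi hfj hij hf hwi hwj hne hai haj
  have e13 : w1 = w3' := cross free1 free3 h13 hw1 hw3' ha1 hb3
  have e23 : w2 = w3' := cross free2 free3 h23 hw2 hw3' ha2 hb3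
  have e21 : w2 = w1' := cross free2 free1 (Ne.symm h12) hw2 hw1' ha2 hb1
  exact hne1 ((e13.trans e23.symm).trans e21)

end Aux

/-- every `(n, 3n)`-multigraph (each colour class a disjoint union of
non-trivial cliques spanning at least `3n` vertices) contains a rainbow matching
of size at least `n - √n`. -/
theorem stmt_1 {V E : Type*} [Fintype V] [DecidableEq V] [Fintype E]
    (n : ℕ) (e₁ e₂ : E → V) (col : E → Fin n)
    (hloop : ∀ e : E, e₁ e ≠ e₂ e)
    (hclique : ∀ c : Fin n, IsCliqueUnion e₁ e₂ col c)
    (hspan : ∀ c : Fin n, 3 * n ≤ (spannedVerts e₁ e₂ col c).card) :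
    ∃ M : Finset E, IsMatchingE e₁ e₂ M ∧ IsRainbow col M ∧
      (n : ℝ) - Real.sqrt n ≤ M.card := by
  classical
  -- a maximum rainbow matching
  obtain ⟨M, hMmem, hmaxraw⟩ := Finset.exists_max_image
    ((univ : Finset (Finset E)).filter fun M => IsMatchingE e₁ e₂ M ∧ IsRainbow col M)
    Finset.card
    ⟨∅, mem_filter.mpr ⟨mem_univ _,
      ⟨fun e he => (notMem_empty e he).elim, fun a ha => (notMem_empty a ha).elim⟩,
      by simp [IsRainbow]⟩⟩
  obtain ⟨hMm, hMr⟩ := (mem_filter.mp hMmem).2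
  have hmax : ∀ M', IsMatchingE e₁ e₂ M' → IsRainbow col M' → M'.card ≤ M.card :=
    fun M' h1 h2 => hmaxraw M' (mem_filter.mpr ⟨mem_univ _, h1, h2⟩)
  refine ⟨M, hMm, hMr, ?_⟩
  have hcard_le : M.card ≤ n := by
    have h1 : M.card = (M.image col).card := (Finset.card_image_of_injOn hMr).symm
    have h2 := card_le_card (subset_univ (M.image col))
    simp only [card_univ, Fintype.card_fin] at h2
    omega
  set d := n - M.card with hd
  clear_value d
  set Fr := (univ : Finset (Fin n)).filter (fun c => ∀ e ∈ M, col e ≠ c) with hFrdef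
  have hFrcard : d ≤ Fr.card := by
    have hsub : (univ : Finset (Fin n)).filter (fun c => ¬ ∀ e ∈ M, col e ≠ c) ⊆
        M.image col := by
      intro c hc
      have h := (mem_filter.mp hc).2
      push_neg at h
      obtain ⟨e, he, hce⟩ := h
      exact mem_image.mpr ⟨e, he, hce⟩
    have h1 := card_le_card hsub
    have h2 := card_image_le (f := col) (s := M)
    have h3 := card_filter_add_card_filter_not
      (s := (univ : Finset (Fin n))) (p := fun c => ∀ e ∈ M, col e ≠ c)
    simp only [card_univ, Fintype.card_fin] at h3
    rw [← hFrdef] at h3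
    omega
  -- double counting split edges
  have hlow : ∀ c ∈ Fr, 3 * n ≤ 3 * M.card + (M.filter (SplitAt e₁ e₂ col M c)).card :=
    fun c hc => splits_lower hloop hMm hMr hmax (hclique c) (hspan c) (mem_filter.mp hc).2
  have hup : ∑ c ∈ Fr, (M.filter (SplitAt e₁ e₂ col M c)).card ≤ 2 * M.card := by
    have hswap : ∑ c ∈ Fr, (M.filter (SplitAt e₁ e₂ col M c)).card
        = ∑ f ∈ M, (Fr.filter (fun c => SplitAt e₁ e₂ col M c f)).card := by
      simp_rw [card_filter]
      exact Finset.sum_comm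
    rw [hswap]
    calc ∑ f ∈ M, (Fr.filter (fun c => SplitAt e₁ e₂ col M c f)).card
        ≤ ∑ _f ∈ M, 2 :=
          sum_le_sum (fun f hf => splits_upper hloop hMm hMr hmax hf)
      _ = 2 * M.card := by rw [sum_const, smul_eq_mul, mul_comm]
  have hlowsum : Fr.card * (3 * n) ≤ Fr.card * (3 * M.card) +
      ∑ c ∈ Fr, (M.filter (SplitAt e₁ e₂ col M c)).card := by
    have h := Finset.sum_le_sum hlow
    rw [sum_const, smul_eq_mul] at h
    calc Fr.card * (3 * n) ≤
        ∑ c ∈ Fr, (3 * M.card + (M.filter (SplitAt e₁ e₂ col M c)).card) := h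
      _ = Fr.card * (3 * M.card) +
          ∑ c ∈ Fr, (M.filter (SplitAt e₁ e₂ col M c)).card := by
          rw [sum_add_distrib, sum_const, smul_eq_mul]
  -- extract 3 d² ≤ 2 M.card
  have hn : n = M.card + d := by omega
  have hexp : Fr.card * (3 * n) = Fr.card * (3 * M.card) + Fr.card * (3 * d) := by
    have h3n : (3 : ℕ) * n = 3 * M.card + 3 * d := by omega
    rw [h3n, Nat.mul_add]
  have h5 : Fr.card * (3 * d) ≤ 2 * M.card := by omega
  have h6 : d * (3 * d) ≤ Fr.card * (3 * d) := Nat.mul_le_mul_right _ hFrcard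
  have h7 : d * (3 * d) = 3 * (d * d) := by ring
  have h8 : 3 * (d * d) ≤ 2 * M.card := by omega
  have h9 : d * d ≤ n := by
    by_contra hcon
    push_neg at hcon
    -- 3(d*d) ≥ 3n + 3 > 2n ≥ 2 M.card
    set P := d * d with hP
    clear_value P
    omega
  -- conclude over the reals
  have hd2 : ((d : ℝ)) ^ 2 ≤ (n : ℝ) := by
    have : ((d * d : ℕ) : ℝ) ≤ (n : ℝ) := by exact_mod_cast h9
    push_cast at this
    nlinarith [this]
  have hsq : (d : ℝ) ≤ Real.sqrt n := by
    calc (d : ℝ) = Real.sqrt ((d : ℝ) ^ 2) := (Real.sqrt_sq (by positivity)).symm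
      _ ≤ Real.sqrt n := Real.sqrt_le_sqrt hd2
  have hmcast : (M.card : ℝ) + (d : ℝ) = (n : ℝ) := by
    have : ((M.card + d : ℕ) : ℝ) = ((n : ℕ) : ℝ) := by rw [← hn]
    push_cast at this
    linarith [this]
  linarith [hsq, hmcast]
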